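/- arXiv:2506.15416 — 6 statements merged into one kernel-verified Lean document; each statement's English description precedes it below -/
import Mathlib

section
/- For a spherical triangle with sides a, b, c and opposite angles A, B, C, the Euclidean-like law of cosines holds: ((cos b + cos c)/(1 + cos a)) * (sin a)^2 = ((cos c + cos a)/(1 + cos b)) * (sin b)^2 + ((cos a + cos b)/(1 + cos c)) * (sin c)^2 - 2 * sin b * sin c * cos A. -/
open Real

theorem spherical_euclidean_like_law_of_cosines
    (a b c A B C : ℝ)
    (ha : a ∈ Set.Ioo 0 π) (hb : b ∈ Set.Ioo 0 π) (hc : c ∈ Set.Ioo 0 π)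
    (hA : cos a = cos b * cos c + sin b * sin c * cos A)
    (hB : cos b = cos c * cos a + sin c * sin a * cos B)
    (hC : cos c = cos a * cos b + sin a * sin b * cos C) :
    ((cos b + cos c) / (1 + cos a)) * (sin a) ^ 2 =
      ((cos c + cos a) / (1 + cos b)) * (sin b) ^ 2 +
      ((cos a + cos b) / (1 + cos c)) * (sin c) ^ 2 -
      2 * sin b * sin c * cos A := by
  have key : ∀ x ∈ Set.Ioo 0 π, -1 < cos x := fun x hx => by
    have hs := Real.sin_pos_of_pos_of_lt_pi hx.1 hx.2
    nlinarith [sin_sq_add_cos_sq x]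
  have h1 : (1:ℝ) + cos a ≠ 0 := by have := key a ha; intro h; linarith
  have h2 : (1:ℝ) + cos b ≠ 0 := by have := key b hb; intro h; linarith
  have h3 : (1:ℝ) + cos c ≠ 0 := by have := key c hc; intro h; linarith
  have sa : sin a ^ 2 = 1 - cos a ^ 2 := by nlinarith [sin_sq_add_cos_sq a]
  have sb : sin b ^ 2 = 1 - cos b ^ 2 := by nlinarith [sin_sq_add_cos_sq b]
  have sc : sin c ^ 2 = 1 - cos c ^ 2 := by nlinarith [sin_sq_add_cos_sq c]
  have hbc : sin b * sin c * cos A = cos a - cos b * cos c := by linarith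
  rw [sa, sb, sc]
  field_simp
  linear_combination (2*(1+cos a)*(1+cos b)*(1+cos c)) * hbc
end

section
/- For a hyperbolic triangle with sides a, b, c and opposite angles A, B, C, the Euclidean-like law of cosines holds: ((cosh b + cosh c)/(1 + cosh a)) * (sinh a)^2 = ((cosh c + cosh a)/(1 + cosh b)) * (sinh b)^2 + ((cosh a + cosh b)/(1 + cosh c)) * (sinh c)^2 - 2 * sinh b * sinh c * cos A. -/
open Real

theorem hyperbolic_euclidean_like_law_of_cosines
    (a b c A B C : ℝ)
    (ha : 0 < a) (hb : 0 < b) (hc : 0 < c)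
    (hA : cosh a = cosh b * cosh c - sinh b * sinh c * cos A)
    (hB : cosh b = cosh c * cosh a - sinh c * sinh a * cos B)
    (hC : cosh c = cosh a * cosh b - sinh a * sinh b * cos C) :
    ((cosh b + cosh c) / (1 + cosh a)) * (sinh a) ^ 2 =
      ((cosh c + cosh a) / (1 + cosh b)) * (sinh b) ^ 2 +
      ((cosh a + cosh b) / (1 + cosh c)) * (sinh c) ^ 2 -
      2 * sinh b * sinh c * cos A := by
  have sa : sinh a ^ 2 = cosh a ^ 2 - 1 := by rw [Real.cosh_sq]; ring
  have sb : sinh b ^ 2 = cosh b ^ 2 - 1 := by rw [Real.cosh_sq]; ring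
  have sc : sinh c ^ 2 = cosh c ^ 2 - 1 := by rw [Real.cosh_sq]; ring
  have pa : (0:ℝ) < 1 + cosh a := by linarith [Real.cosh_pos a]
  have pb : (0:ℝ) < 1 + cosh b := by linarith [Real.cosh_pos b]
  have pc : (0:ℝ) < 1 + cosh c := by linarith [Real.cosh_pos c]
  rw [sa, sb, sc]
  field_simp
  linear_combination ((1 + Real.cosh a) * (1 + Real.cosh b) * (1 + Real.cosh c) * 2) * hA
end

section
/- For a right spherical triangle with hypotenuse a (i.e. cos A = 0, so cos a = cos b * cos c), the three-square identity holds: ((cos b + cos c)/(1 + cos a)) * (sin a)^2 = ((cos c + cos a)/(1 + cos b)) * (sin b)^2 + ((cos a + cos b)/(1 + cos c)) * (sin c)^2. -/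
open Real

theorem spherical_three_square_theorem
    (a b c B C : ℝ)
    (ha : a ∈ Set.Ioo 0 π) (hb : b ∈ Set.Ioo 0 π) (hc : c ∈ Set.Ioo 0 π)
    (hA : cos a = cos b * cos c)
    (hB : cos b = cos c * cos a + sin c * sin a * cos B)
    (hC : cos c = cos a * cos b + sin a * sin b * cos C) :
    ((cos b + cos c) / (1 + cos a)) * (sin a) ^ 2 =
      ((cos c + cos a) / (1 + cos b)) * (sin b) ^ 2 +
      ((cos a + cos b) / (1 + cos c)) * (sin c) ^ 2 := by
  have key : ∀ x : ℝ, x ∈ Set.Ioo 0 π → (0:ℝ) < 1 + cos x := by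
    intro x hx
    have := Real.cos_lt_cos_of_nonneg_of_le_pi (le_of_lt hx.1) le_rfl hx.2
    simp [Real.cos_pi] at this
    linarith
  have h1 := key a ha
  have h2 := key b hb
  have h3 := key c hc
  have sa := sin_sq a
  have sb := sin_sq b
  have sc := sin_sq c
  rw [sa, sb, sc, hA] at *
  field_simp
  ring
end

section
/- For a right hyperbolic triangle with hypotenuse a (i.e. cos A = 0, so cosh a = cosh b * cosh c), the three-square identity holds: ((cosh b + cosh c)/(1 + cosh a)) * (sinh a)^2 = ((cosh c + cosh a)/(1 + cosh b)) * (sinh b)^2 + ((cosh a + cosh b)/(1 + cosh c)) * (sinh c)^2. -/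
open Real

theorem hyperbolic_three_square_theorem
    (a b c B C : ℝ)
    (ha : 0 < a) (hb : 0 < b) (hc : 0 < c)
    (hA : cosh a = cosh b * cosh c)
    (hB : cosh b = cosh c * cosh a - sinh c * sinh a * cos B)
    (hC : cosh c = cosh a * cosh b - sinh a * sinh b * cos C) :
    ((cosh b + cosh c) / (1 + cosh a)) * (sinh a) ^ 2 =
      ((cosh c + cosh a) / (1 + cosh b)) * (sinh b) ^ 2 +
      ((cosh a + cosh b) / (1 + cosh c)) * (sinh c) ^ 2 := by
  have h1 : (1:ℝ) + cosh a ≠ 0 := by positivity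
  have h2 : (1:ℝ) + cosh b ≠ 0 := by positivity
  have h3 : (1:ℝ) + cosh c ≠ 0 := by positivity
  rw [Real.sinh_sq, Real.sinh_sq, Real.sinh_sq, hA] at *
  field_simp
  ring
end

section
/- If a, b, c are positive reals, cosh a = cosh b * cosh c, and we set λ_a = (cosh b + cosh c)/(1 + cosh a), λ_b = (cosh c + cosh a)/(1 + cosh b), λ_c = (cosh a + cosh b)/(1 + cosh c), then λ_a * sinh(a)^2 = λ_b * sinh(b)^2 + λ_c * sinh(c)^2. -/
open Real

theorem hyperbolic_three_square_identity
    (a b c : ℝ) (ha : 0 < a) (hb : 0 < b) (hc : 0 < c)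
    (h : cosh a = cosh b * cosh c) :
    ((cosh b + cosh c) / (1 + cosh a)) * sinh a ^ 2 =
      ((cosh c + cosh a) / (1 + cosh b)) * sinh b ^ 2 +
      ((cosh a + cosh b) / (1 + cosh c)) * sinh c ^ 2 := by
  have sq : ∀ x : ℝ, sinh x ^ 2 = cosh x ^ 2 - 1 := by
    intro x; have := Real.cosh_sq x; linarith
  have pa : (1 : ℝ) + cosh a > 0 := by positivity
  have pb : (1 : ℝ) + cosh b > 0 := by positivity
  have pc : (1 : ℝ) + cosh c > 0 := by positivity
  rw [sq, sq, sq, h]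
  field_simp
  ring
end

section
/- If a, b, c lie in (0, π), cos a = cos b * cos c, and we set λ_a = (cos b + cos c)/(1 + cos a), λ_b = (cos c + cos a)/(1 + cos b), λ_c = (cos a + cos b)/(1 + cos c), then λ_a * sin(a)^2 = λ_b * sin(b)^2 + λ_c * sin(c)^2. -/
open Real

lemma pos_one_add_cos {x : ℝ} (hx : x ∈ Set.Ioo 0 π) : 0 < 1 + Real.cos x := by
  have h2 : Real.cos (x/2) > 0 := Real.cos_pos_of_mem_Ioo
    ⟨by nlinarith [hx.1, Real.pi_pos], by nlinarith [hx.2, Real.pi_pos]⟩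
  have := Real.cos_sq (x/2)
  have hx2 : 2 * (x/2) = x := by ring
  rw [hx2] at this
  nlinarith

theorem spherical_three_square_identity
    (a b c : ℝ) (ha : a ∈ Set.Ioo 0 π) (hb : b ∈ Set.Ioo 0 π) (hc : c ∈ Set.Ioo 0 π)
    (h : cos a = cos b * cos c) :
    ((cos b + cos c) / (1 + cos a)) * sin a ^ 2 =
      ((cos c + cos a) / (1 + cos b)) * sin b ^ 2 +
      ((cos a + cos b) / (1 + cos c)) * sin c ^ 2 := by
  have h1 := pos_one_add_cos ha
  have h2 := pos_one_add_cos hb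
  have h3 := pos_one_add_cos hc
  have sa : sin a ^ 2 = 1 - cos a ^ 2 := by rw [Real.sin_sq]
  have sb : sin b ^ 2 = 1 - cos b ^ 2 := by rw [Real.sin_sq]
  have sc : sin c ^ 2 = 1 - cos c ^ 2 := by rw [Real.sin_sq]
  rw [sa, sb, sc, h] at *
  field_simp
  ring
end
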